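/- For every real M > 0 there exists ε_0 > 0 such that for all ε with 0 < ε < ε_0, any natural number n and real coefficients c_0, ..., c_n satisfying |x - ∑_{k=0}^n c_k x^{2k}| ≤ ε for all x ∈ [0,1] must have max_{0 ≤ k ≤ n} |c_k| > M. -/
import Mathlib

lemma geo_aux (n : ℕ) : ∑ i ∈ Finset.range n, (1/4:ℝ)^i ≤ 4/3 := by
  rw [geom_sum_eq (by norm_num)]
  have h : (0:ℝ) ≤ (1/4:ℝ)^n := by positivity
  have h1 : (1/4:ℝ)^n ≤ 1 := pow_le_one₀ (by norm_num) (by norm_num)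
  rw [div_le_iff_of_neg (by norm_num)]
  nlinarith

theorem stmt_15 (M : ℝ) (hM : 0 < M) :
    ∃ ε₀ > (0:ℝ), ∀ ε : ℝ, 0 < ε → ε < ε₀ →
      ∀ (n : ℕ) (c : ℕ → ℝ),
        (∀ x ∈ Set.Icc (0:ℝ) 1, |x - ∑ k ∈ Finset.range (n+1), c k * x ^ (2*k)| ≤ ε) →
        (Finset.range (n+1)).sup' (Finset.nonempty_range_iff.mpr (Nat.succ_ne_zero n))
          (fun k => |c k|) > M := by
  set x₀ : ℝ := min (1/(8*M)) (1/2) with hx₀def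
  have hx₀pos : 0 < x₀ := lt_min (by positivity) (by norm_num)
  have hx₀le : x₀ ≤ 1/2 := min_le_right _ _
  have hx₀M : x₀ ≤ 1/(8*M) := min_le_left _ _
  refine ⟨(3/8)*x₀, by positivity, ?_⟩
  intro ε hε hεlt n c happ
  by_contra hcon
  push_neg at hcon
  have hc : ∀ k ∈ Finset.range (n+1), |c k| ≤ M := fun k hk =>
    le_trans (Finset.le_sup' (fun k => |c k|) hk) hcon
  -- at x = 0 : |c 0| ≤ ε
  have h0 := happ 0 ⟨le_refl _, by norm_num⟩
  have hsum0 : ∑ k ∈ Finset.range (n+1), c k * (0:ℝ) ^ (2*k) = c 0 := by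
    rw [Finset.sum_eq_single 0]
    · norm_num
    · intro k _ hk
      have : 2*k ≠ 0 := by omega
      rw [zero_pow this, mul_zero]
    · intro h; exact absurd (Finset.mem_range.mpr (Nat.succ_pos n)) h
  rw [hsum0] at h0
  have hc0 : |c 0| ≤ ε := by rwa [zero_sub, abs_neg] at h0
  -- at x = x₀
  have h1 := happ x₀ ⟨le_of_lt hx₀pos, by linarith⟩
  -- bound the sum at x₀
  have hx₀sq : x₀^2 ≤ 1/4 := by nlinarith
  have hsplit : ∑ k ∈ Finset.range (n+1), c k * x₀ ^ (2*k)
      = (∑ i ∈ Finset.range n, c (i+1) * x₀ ^ (2*(i+1))) + c 0 := by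
    rw [Finset.sum_range_succ']
    norm_num
  have htail : |∑ i ∈ Finset.range n, c (i+1) * x₀ ^ (2*(i+1))| ≤ M * x₀^2 * (4/3) := by
    calc |∑ i ∈ Finset.range n, c (i+1) * x₀ ^ (2*(i+1))|
        ≤ ∑ i ∈ Finset.range n, |c (i+1) * x₀ ^ (2*(i+1))| := Finset.abs_sum_le_sum_abs _ _
      _ ≤ ∑ i ∈ Finset.range n, M * x₀^2 * (1/4)^i := by
          apply Finset.sum_le_sum
          intro i hi
          rw [abs_mul, abs_pow, abs_of_pos hx₀pos]
          have hci : |c (i+1)| ≤ M := hc (i+1)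
            (Finset.mem_range.mpr (by have := Finset.mem_range.mp hi; omega))
          have hpow : x₀ ^ (2*(i+1)) = x₀^2 * (x₀^2)^i := by ring
          rw [hpow]
          have h2 : (x₀^2)^i ≤ (1/4:ℝ)^i :=
            pow_le_pow_left₀ (by positivity) hx₀sq i
          have hx2 : (0:ℝ) ≤ x₀^2 := by positivity
          calc |c (i+1)| * (x₀^2 * (x₀^2)^i)
              ≤ M * (x₀^2 * (1/4)^i) :=
                mul_le_mul hci (mul_le_mul_of_nonneg_left h2 hx2)
                  (by positivity) hM.le
            _ = M * x₀^2 * (1/4)^i := by ring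
      _ = M * x₀^2 * ∑ i ∈ Finset.range n, (1/4:ℝ)^i := by
          rw [Finset.mul_sum]
      _ ≤ M * x₀^2 * (4/3) :=
          mul_le_mul_of_nonneg_left (geo_aux n) (by positivity)
  have hMx : M * x₀^2 ≤ x₀/8 := by
    have h8M : (0:ℝ) < 8*M := by positivity
    rw [le_div_iff₀ h8M] at hx₀M
    nlinarith
  -- combine
  have hS : |∑ k ∈ Finset.range (n+1), c k * x₀ ^ (2*k)| ≤ ε + x₀/6 := by
    rw [hsplit]
    calc |(∑ i ∈ Finset.range n, c (i+1) * x₀ ^ (2*(i+1))) + c 0|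
        ≤ |∑ i ∈ Finset.range n, c (i+1) * x₀ ^ (2*(i+1))| + |c 0| := abs_add_le _ _
      _ ≤ M * x₀^2 * (4/3) + ε := add_le_add htail hc0
      _ ≤ ε + x₀/6 := by nlinarith
  have hfinal : x₀ ≤ 2*ε + x₀/6 := by
    have := abs_sub_abs_le_abs_sub x₀ (∑ k ∈ Finset.range (n+1), c k * x₀ ^ (2*k))
    rw [abs_of_pos hx₀pos] at this
    linarith [abs_nonneg (∑ k ∈ Finset.range (n+1), c k * x₀ ^ (2*k))]
  linarith
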